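/- Let g be a density on (0,∞) with p(ζ) = ∫₀^ζ g and v(ζ) = ∫₀^ζ p. Suppose v is strictly increasing on the set where it is positive, ζ_n satisfies v(ζ_n) = λ/n with p(ζ_n) > 0, and r_n(ζ) = λ/p(ζ) + nζ − n·v(ζ)/p(ζ). Then r_n(ζ) ≥ r_n(ζ_n) = n·ζ_n for all ζ > 0 with p(ζ) > 0; i.e., inf_{ζ>0} r_n(ζ) = n·ζ_n. -/

import Mathlib

open MeasureTheory Set

lemma g_integrable (g p : ℝ → ℝ) (hp : ∀ ζ, p ζ = ∫ μ in Ioc (0 : ℝ) ζ, g μ)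
    {M : ℝ} (hM : 0 < p M) : IntegrableOn g (Ioc 0 M) := by
  by_contra h
  rw [hp M, integral_undef h] at hM
  exact lt_irrefl 0 hM

lemma p_monotone (g p : ℝ → ℝ) (hg : ∀ μ, 0 ≤ g μ)
    (hp : ∀ ζ, p ζ = ∫ μ in Ioc (0 : ℝ) ζ, g μ)
    {M : ℝ} (hint : IntegrableOn g (Ioc 0 M)) :
    MonotoneOn p (Icc 0 M) := by
  intro a ha b hb hab
  have hsplit : Ioc (0 : ℝ) b = Ioc 0 a ∪ Ioc a b := (Ioc_union_Ioc_eq_Ioc ha.1 hab).symm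
  have hia : IntegrableOn g (Ioc 0 a) := hint.mono_set (Ioc_subset_Ioc_right (hab.trans hb.2))
  have hib : IntegrableOn g (Ioc a b) := hint.mono_set (Ioc_subset_Ioc ha.1 hb.2)
  have hpb : p b = p a + ∫ μ in Ioc a b, g μ := by
    rw [hp a, hp b, hsplit, setIntegral_union (Set.Ioc_disjoint_Ioc_of_le le_rfl) measurableSet_Ioc hia hib]
  have hnn : 0 ≤ ∫ μ in Ioc a b, g μ :=
    setIntegral_nonneg measurableSet_Ioc (fun x _ => hg x)
  linarith

lemma v_diff (p v : ℝ → ℝ) (hv : ∀ ζ, v ζ = ∫ μ in Ioc (0 : ℝ) ζ, p μ)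
    {a b : ℝ} (ha : 0 ≤ a) (hab : a ≤ b) (hint : IntegrableOn p (Ioc 0 b)) :
    v b - v a = ∫ μ in Ioc a b, p μ := by
  have hsplit : Ioc (0 : ℝ) b = Ioc 0 a ∪ Ioc a b := (Ioc_union_Ioc_eq_Ioc ha hab).symm
  have hia : IntegrableOn p (Ioc 0 a) := hint.mono_set (Ioc_subset_Ioc_right hab)
  have hib : IntegrableOn p (Ioc a b) := hint.mono_set (Ioc_subset_Ioc ha le_rfl)
  rw [hv a, hv b, hsplit, setIntegral_union (Set.Ioc_disjoint_Ioc_of_le le_rfl) measurableSet_Ioc hia hib]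
  ring

/-- if `v` is strictly increasing where positive and `v ζₙ = λ/n`
with `p ζₙ > 0`, then `r(ζ) ≥ r(ζₙ) = n ζₙ` for all `ζ > 0` with `p(ζ) > 0`. -/
theorem stmt_2 (g p v : ℝ → ℝ) (lam n : ℝ) (hlam : 0 < lam) (hn : 0 < n)
    (hg : ∀ μ, 0 ≤ g μ)
    (hp : ∀ ζ, p ζ = ∫ μ in Ioc (0 : ℝ) ζ, g μ)
    (hv : ∀ ζ, v ζ = ∫ μ in Ioc (0 : ℝ) ζ, p μ)
    (hmono : StrictMonoOn v {x | 0 < v x})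
    (r : ℝ → ℝ)
    (hr : ∀ ζ, 0 < p ζ → r ζ = lam / p ζ + n * ζ - n * v ζ / p ζ)
    (ζn : ℝ) (hζn : 0 < ζn) (h1 : v ζn = lam / n) (h2 : 0 < p ζn) :
    r ζn = n * ζn ∧ ∀ ζ, 0 < ζ → 0 < p ζ → n * ζn ≤ r ζ := by
  have hlam' : lam = n * v ζn := by
    rw [h1]; field_simp
  constructor
  · rw [hr ζn h2, h1]
    field_simp
    ring
  · intro ζ hζ hpζ
    -- key inequality: (ζn - ζ) * p ζ ≤ v ζn - v ζ
    have key : (ζn - ζ) * p ζ ≤ v ζn - v ζ := by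
      rcases le_or_gt ζ ζn with hle | hlt
      · -- ζ ≤ ζn
        have hgint : IntegrableOn g (Ioc 0 ζn) := g_integrable g p hp h2
        have hmonop : MonotoneOn p (Icc 0 ζn) := p_monotone g p hg hp hgint
        have hpint : IntegrableOn p (Ioc 0 ζn) :=
          (hmonop.integrableOn_isCompact isCompact_Icc).mono_set Ioc_subset_Icc_self
        have hdiff := v_diff p v hv hζ.le hle hpint
        have hlow : ∫ μ in Ioc ζ ζn, (fun _ => p ζ) μ ≤ ∫ μ in Ioc ζ ζn, p μ := by
          apply setIntegral_mono_on (integrableOn_const measure_Ioc_lt_top.ne)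
            (hpint.mono_set (Ioc_subset_Ioc hζ.le le_rfl)) measurableSet_Ioc
          intro x hx
          exact hmonop ⟨hζ.le, hle⟩ ⟨(hζ.trans hx.1).le, hx.2⟩ hx.1.le
        rw [setIntegral_const, measureReal_def, Real.volume_Ioc, ENNReal.toReal_ofReal (by linarith),
          smul_eq_mul] at hlow
        linarith [hdiff, hlow]
      · -- ζn < ζ
        have hgint : IntegrableOn g (Ioc 0 ζ) := g_integrable g p hp hpζ
        have hmonop : MonotoneOn p (Icc 0 ζ) := p_monotone g p hg hp hgint
        have hpint : IntegrableOn p (Ioc 0 ζ) :=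
          (hmonop.integrableOn_isCompact isCompact_Icc).mono_set Ioc_subset_Icc_self
        have hdiff := v_diff p v hv hζn.le hlt.le hpint
        have hup : ∫ μ in Ioc ζn ζ, p μ ≤ ∫ μ in Ioc ζn ζ, (fun _ => p ζ) μ := by
          apply setIntegral_mono_on (hpint.mono_set (Ioc_subset_Ioc hζn.le le_rfl))
            (integrableOn_const measure_Ioc_lt_top.ne) measurableSet_Ioc
          intro x hx
          exact hmonop ⟨(hζn.trans hx.1).le, hx.2⟩ ⟨hζ.le, le_rfl⟩ hx.2
        rw [setIntegral_const, measureReal_def, Real.volume_Ioc, ENNReal.toReal_ofReal (by linarith),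
          smul_eq_mul] at hup
        nlinarith [hdiff, hup]
    rw [hr ζ hpζ]
    have h3 : n * (ζn - ζ) ≤ (lam - n * v ζ) / p ζ := by
      rw [le_div_iff₀ hpζ]
      nlinarith [mul_le_mul_of_nonneg_left key hn.le]
    have h4 : lam / p ζ - n * v ζ / p ζ = (lam - n * v ζ) / p ζ := (sub_div _ _ _).symm
    linarith
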